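/- (Corollary 1, logistic case.) Let Z ∈ ℝ^{n×q}, X ∈ ℝ^{n×p}, and suppose the n×(p+1) matrix [1_n | X] obtained by prepending a column of ones to X has full column rank. Let γ^c ∈ ℝ^q satisfy the constraint ‖(X − n⁻¹ 1_n 1_nᵀ X)ᵀ σ(Zγ^c)‖₂² = 0, and set ŷ^c = σ(Zγ^c) (sigmoid applied entrywise), with mean ȳ^c = n⁻¹ Σᵢ ŷᵢ^c ∈ (0,1). Then the unique global minimizer (β̂₀, β̂) of the logistic evaluation objective with intercept, (β₀, β) ↦ Σᵢ [log(1 + exp(β₀ + xᵢᵀβ)) − ŷᵢ^c (β₀ + xᵢᵀβ)], satisfies β̂ = 0 (and β̂₀ = log(ȳ^c/(1−ȳ^c))); i.e., the constrained optimization produces corrected coefficients with β̂^c = 0. -/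

import Mathlib

open Matrix

noncomputable def sigAux (t : ℝ) : ℝ := 1 / (1 + Real.exp (-t))
noncomputable def lgtAux (t : ℝ) : ℝ := Real.log (1 + Real.exp t)

lemma sigAux_pos (t : ℝ) : 0 < sigAux t := by
  unfold sigAux; positivity

lemma sigAux_lt_one (t : ℝ) : sigAux t < 1 := by
  unfold sigAux
  rw [div_lt_one (by positivity)]
  linarith [Real.exp_pos (-t)]

lemma hasDerivAt_lgtAux (t : ℝ) : HasDerivAt lgtAux (sigAux t) t := by
  have h1 : HasDerivAt (fun t => 1 + Real.exp t) (Real.exp t) t :=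
    (Real.hasDerivAt_exp t).const_add 1
  have h2 : (1 : ℝ) + Real.exp t ≠ 0 := by positivity
  have := h1.log h2
  convert this using 1
  · rfl
  unfold sigAux
  rw [Real.exp_neg]
  have he := (Real.exp_pos t).ne'
  field_simp
  ring

lemma sigAux_strictMono : StrictMono sigAux := by
  intro a b hab
  unfold sigAux
  apply one_div_lt_one_div_of_lt (by positivity)
  have := Real.exp_lt_exp.2 (neg_lt_neg hab)
  linarith

lemma lgtAux_strictConvex : StrictConvexOn ℝ Set.univ lgtAux := by
  apply StrictMonoOn.strictConvexOn_of_deriv convex_univ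
  · exact fun x _ => ((hasDerivAt_lgtAux x).continuousAt).continuousWithinAt
  · have hd : deriv lgtAux = sigAux := funext fun x => (hasDerivAt_lgtAux x).deriv
    rw [hd, interior_univ]
    exact sigAux_strictMono.strictMonoOn _

lemma lgtAux_tangent_le (a s : ℝ) : lgtAux a + sigAux a * (s - a) ≤ lgtAux s := by
  rcases lt_trichotomy s a with h | h | h
  · have := lgtAux_strictConvex.slope_lt_of_hasDerivAt (Set.mem_univ s) (Set.mem_univ a) h
      (hasDerivAt_lgtAux a)
    rw [slope_def_field, div_lt_iff₀ (by linarith)] at this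
    nlinarith
  · simp [h]
  · have := lgtAux_strictConvex.lt_slope_of_hasDerivAt (Set.mem_univ a) (Set.mem_univ s) h
      (hasDerivAt_lgtAux a)
    rw [slope_def_field, lt_div_iff₀ (by linarith)] at this
    nlinarith

lemma lgtAux_tangent_lt (a s : ℝ) (hne : s ≠ a) : lgtAux a + sigAux a * (s - a) < lgtAux s := by
  rcases lt_or_gt_of_ne hne with h | h
  · have := lgtAux_strictConvex.slope_lt_of_hasDerivAt (Set.mem_univ s) (Set.mem_univ a) h
      (hasDerivAt_lgtAux a)
    rw [slope_def_field, div_lt_iff₀ (by linarith)] at this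
    nlinarith
  · have := lgtAux_strictConvex.lt_slope_of_hasDerivAt (Set.mem_univ a) (Set.mem_univ s) h
      (hasDerivAt_lgtAux a)
    rw [slope_def_field, lt_div_iff₀ (by linarith)] at this
    nlinarith

lemma sigAux_logit {y : ℝ} (h0 : 0 < y) (h1 : y < 1) :
    sigAux (Real.log (y / (1 - y))) = y := by
  unfold sigAux
  rw [Real.exp_neg, Real.exp_log (div_pos h0 (by linarith)), inv_div]
  have hy := h0.ne'
  have h1' : (1 : ℝ) - y ≠ 0 := by linarith
  field_simp
  ring

/-- Corollary 1 (logistic case): if `γ^c` satisfies the centered constraint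
`‖(X − n⁻¹ 1 1ᵀ X)ᵀ σ(Zγ^c)‖₂² = 0`, then for `ŷ^c = σ(Zγ^c)` with mean `ȳ^c`,
the logistic evaluation model with intercept has its unique global minimizer at
`(β₀, β) = (log(ȳ^c/(1−ȳ^c)), 0)`. -/
theorem corollary1_logistic
    (n p q : ℕ)
    (Z : Matrix (Fin n) (Fin q) ℝ) (X : Matrix (Fin n) (Fin p) ℝ)
    (A : Matrix (Fin n) (Fin (p + 1)) ℝ)
    (hA_def : A = Matrix.of fun i j =>
      Fin.cases (motive := fun _ => ℝ) 1 (fun j' => X i j') j)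
    (hA : IsUnit (Aᵀ * A))
    (γc : Fin q → ℝ)
    (σ : ℝ → ℝ) (hσ : σ = fun t => 1 / (1 + Real.exp (-t)))
    (yc : Fin n → ℝ) (hyc : yc = fun i => σ (Z.mulVec γc i))
    (Xc : Matrix (Fin n) (Fin p) ℝ)
    (hXc : Xc = X - (n : ℝ)⁻¹ • ((Matrix.of fun _ _ => (1 : ℝ)) * X))
    (hconstr : ∑ j, (Xcᵀ.mulVec yc j) ^ 2 = 0)
    (ybar : ℝ) (hybar : ybar = (n : ℝ)⁻¹ * ∑ i, yc i)
    (L : ℝ → (Fin p → ℝ) → ℝ)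
    (hL : L = fun β₀ β => ∑ i,
      (Real.log (1 + Real.exp (β₀ + X.mulVec β i)) - yc i * (β₀ + X.mulVec β i))) :
    (0 < ybar ∧ ybar < 1) ∧
      ∀ β₀ : ℝ, ∀ β : Fin p → ℝ,
        (β₀, β) ≠ (Real.log (ybar / (1 - ybar)), (0 : Fin p → ℝ)) →
          L (Real.log (ybar / (1 - ybar))) 0 < L β₀ β := by
  -- σ is sigAux
  have hσ' : σ = sigAux := by funext t; rw [hσ]; rfl
  -- n is positive
  have hn : 0 < n := by
    rcases Nat.eq_zero_or_pos n with h | h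
    · exfalso
      subst h
      have hzero : Aᵀ * A = 0 := by
        ext i j; simp [Matrix.mul_apply]
      rw [hzero] at hA
      have hdet := (Matrix.isUnit_iff_isUnit_det _).1 hA
      rw [Matrix.det_zero] at hdet
      exact not_isUnit_zero hdet
    · exact h
  have hnR : (0 : ℝ) < n := by exact_mod_cast hn
  -- yc values in (0,1)
  have hy01 : ∀ i, 0 < yc i ∧ yc i < 1 := by
    intro i
    rw [hyc, hσ']
    exact ⟨sigAux_pos _, sigAux_lt_one _⟩
  have hne_univ : (Finset.univ : Finset (Fin n)).Nonempty := ⟨⟨0, hn⟩, Finset.mem_univ _⟩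
  -- ybar bounds
  have hy0 : 0 < ybar := by
    rw [hybar]
    exact mul_pos (inv_pos.2 hnR) (Finset.sum_pos (fun i _ => (hy01 i).1) hne_univ)
  have hy1 : ybar < 1 := by
    rw [hybar]
    have h1 : ∑ i, yc i < ∑ _i : Fin n, (1 : ℝ) :=
      Finset.sum_lt_sum_of_nonempty hne_univ (fun i _ => (hy01 i).2)
    rw [Finset.sum_const, Finset.card_univ, Fintype.card_fin, nsmul_eq_mul, mul_one] at h1
    have := mul_lt_mul_of_pos_left h1 (inv_pos.2 hnR)
    rwa [inv_mul_cancel₀ hnR.ne'] at this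
  set b₀ : ℝ := Real.log (ybar / (1 - ybar)) with hb₀def
  have hb0 : sigAux b₀ = ybar := sigAux_logit hy0 hy1
  -- sum of yc
  have hSy : ∑ i, yc i = n * ybar := by
    rw [hybar]
    field_simp
  -- mulVec formula
  have hmv : ∀ (β : Fin p → ℝ) (i : Fin n), X.mulVec β i = ∑ j, X i j * β j := by
    intro β i
    simp [Matrix.mulVec, dotProduct]
  -- constraint componentwise
  have hcz : ∀ j, Xcᵀ.mulVec yc j = 0 := by
    intro j
    have h := (Finset.sum_eq_zero_iff_of_nonneg
      (fun j _ => sq_nonneg (Xcᵀ.mulVec yc j))).1 hconstr j (Finset.mem_univ j)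
    exact (pow_eq_zero_iff (two_ne_zero)).1 h
  have hXy : ∀ j, ∑ i, X i j * yc i = ybar * ∑ i, X i j := by
    intro j
    have h0 : ∑ i, Xc i j * yc i = 0 := by
      have := hcz j
      simpa [Matrix.mulVec, dotProduct, Matrix.transpose_apply] using this
    have hXcij : ∀ i, Xc i j = X i j - (n : ℝ)⁻¹ * ∑ k, X k j := by
      intro i
      rw [hXc]
      simp [Matrix.mul_apply, Matrix.sub_apply]
      left
      show ∑ k, (1 : ℝ) * X k j = ∑ k, X k j
      simp
    rw [Finset.sum_congr rfl (fun i _ => by rw [hXcij i, sub_mul])] at h0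
    rw [Finset.sum_sub_distrib] at h0
    have h2 : ∑ i, (n : ℝ)⁻¹ * (∑ k, X k j) * yc i
        = (n : ℝ)⁻¹ * (∑ k, X k j) * ∑ i, yc i := (Finset.mul_sum _ _ _).symm
    rw [h2, hSy] at h0
    have hfin : (n : ℝ)⁻¹ * (∑ k, X k j) * (↑n * ybar) = ybar * ∑ k, X k j := by
      field_simp
    linarith
  refine ⟨⟨hy0, hy1⟩, ?_⟩
  intro β₀ β hne
  set s : Fin n → ℝ := fun i => β₀ + X.mulVec β i with hs
  -- the linear term vanishes
  have hzero : ∑ i, (ybar - yc i) * (s i - b₀) = 0 := by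
    have expand : ∀ i, (ybar - yc i) * (s i - b₀)
        = (β₀ - b₀) * (ybar - yc i) + ∑ j, (ybar - yc i) * X i j * β j := by
      intro i
      have hsi : s i - b₀ = (β₀ - b₀) + ∑ j, X i j * β j := by
        simp only [hs]
        rw [hmv β i]
        ring
      rw [hsi, mul_add, Finset.mul_sum, mul_comm (ybar - yc i) (β₀ - b₀)]
      congr 1
      apply Finset.sum_congr rfl
      intro j _
      ring
    rw [Finset.sum_congr rfl (fun i _ => expand i), Finset.sum_add_distrib]
    have h1 : ∑ i, (β₀ - b₀) * (ybar - yc i) = 0 := by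
      rw [← Finset.mul_sum]
      have hz : ∑ i, (ybar - yc i) = 0 := by
        rw [Finset.sum_sub_distrib, Finset.sum_const, Finset.card_univ, Fintype.card_fin,
          nsmul_eq_mul, hSy, sub_self]
      rw [hz, mul_zero]
    have h2 : ∑ i, ∑ j, (ybar - yc i) * X i j * β j = 0 := by
      rw [Finset.sum_comm]
      apply Finset.sum_eq_zero
      intro j _
      have hsplit : ∑ i, (ybar - yc i) * X i j * β j
          = (ybar * (∑ i, X i j) - ∑ i, X i j * yc i) * β j := by
        rw [← Finset.sum_mul]
        congr 1
        rw [Finset.sum_congr rfl (fun i _ => by ring : ∀ i ∈ Finset.univ,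
          (ybar - yc i) * X i j = ybar * X i j - X i j * yc i)]
        rw [Finset.sum_sub_distrib, ← Finset.mul_sum]
      rw [hsplit, hXy j, sub_self, zero_mul]
    rw [h1, h2, add_zero]
  -- some coordinate differs
  have hex : ∃ i, s i ≠ b₀ := by
    by_contra hall
    push_neg at hall
    set v : Fin (p + 1) → ℝ := Fin.cons (β₀ - b₀) β with hv
    have hAv : A.mulVec v = 0 := by
      funext i
      have hAi : A.mulVec v i = (β₀ - b₀) + ∑ j, X i j * β j := by
        rw [Matrix.mulVec, dotProduct, Fin.sum_univ_succ]
        rw [hA_def, hv]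
        simp
      have hthis := hall i
      simp only [hs] at hthis
      rw [hmv β i] at hthis
      have hz : (β₀ - b₀) + ∑ j, X i j * β j = 0 := by linarith
      rw [hAi, hz]
      rfl
    have hinj : Function.Injective (Aᵀ * A).mulVec :=
      Matrix.mulVec_injective_iff_isUnit.2 hA
    have hv0 : v = 0 := by
      apply hinj
      rw [← Matrix.mulVec_mulVec, hAv, Matrix.mulVec_zero, Matrix.mulVec_zero]
    have hβ₀ : β₀ = b₀ := by
      have := congrFun hv0 0
      rw [hv] at this
      simp at this
      linarith
    have hβ : β = 0 := by
      funext j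
      have := congrFun hv0 j.succ
      rw [hv] at this
      simpa using this
    exact hne (by rw [hβ₀, hβ])
  obtain ⟨i₀, hi₀⟩ := hex
  -- main strict inequality
  have key : ∑ i, (lgtAux b₀ + ybar * (s i - b₀) - yc i * s i)
      < ∑ i, (lgtAux (s i) - yc i * s i) := by
    apply Finset.sum_lt_sum
    · intro i _
      have := lgtAux_tangent_le b₀ (s i)
      rw [hb0] at this
      linarith
    · refine ⟨i₀, Finset.mem_univ _, ?_⟩
      have := lgtAux_tangent_lt b₀ (s i₀) hi₀
      rw [hb0] at this
      linarith
  have hR : L β₀ β = ∑ i, (lgtAux (s i) - yc i * s i) := by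
    rw [hL]
    apply Finset.sum_congr rfl
    intro i _
    rw [hs]
    simp [lgtAux]
  have hLmin : L b₀ 0 = ∑ i, (lgtAux b₀ + ybar * (s i - b₀) - yc i * s i) := by
    have h1 : L b₀ 0 = ∑ i, (lgtAux b₀ - yc i * b₀) := by
      rw [hL]
      simp [lgtAux]
    have hdiff : ∑ i, ((lgtAux b₀ + ybar * (s i - b₀) - yc i * s i)
        - (lgtAux b₀ - yc i * b₀)) = ∑ i, (ybar - yc i) * (s i - b₀) :=
      Finset.sum_congr rfl (fun i _ => by ring)
    rw [Finset.sum_sub_distrib, hzero] at hdiff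
    linarith
  rw [hLmin, hR]
  exact key
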